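/- Let u : (-1,1)² → ℝ² be defined by u(x₁,x₂) = (x₁, x₂x₁) for x₁ > 0 and u(x₁,x₂) = (x₁, −x₂x₁) for x₁ ≤ 0. Then det ∇u(x) = |x₁| > 0 for a.e. x, and the dilatation K(x) = |∇u(x)|²/det ∇u(x) satisfies ∫_{(-1,1)²} K(x) dx = ∞. -/

import Mathlib

open Matrix MeasureTheory
open scoped ENNReal

/-- The a.e. Jacobian matrix of a map ℝ² → ℝ². -/
noncomputable def Jac (f : (Fin 2 → ℝ) → (Fin 2 → ℝ)) (x : Fin 2 → ℝ) :
    Matrix (Fin 2) (Fin 2) ℝ :=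
  LinearMap.toMatrix' (fderiv ℝ f x).toLinearMap

/-- The bow-tie map u of Example 1. -/
noncomputable def uEx (x : Fin 2 → ℝ) : Fin 2 → ℝ :=
  if 0 < x 0 then ![x 0, x 1 * x 0] else ![x 0, -(x 1 * x 0)]

/-- The open unit square (-1,1)². -/
def Q1 : Set (Fin 2 → ℝ) := Set.univ.pi fun _ => Set.Ioo (-1 : ℝ) 1

/-- Frobenius norm of a 2×2 matrix. -/
noncomputable def frobNorm (A : Matrix (Fin 2) (Fin 2) ℝ) : ℝ :=
  Real.sqrt (∑ i, ∑ j, (A i j) ^ 2)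

lemma hasFDerivAt_aux (s : ℝ) (x : Fin 2 → ℝ) :
    HasFDerivAt (fun y : Fin 2 → ℝ => ![y 0, s * (y 1 * y 0)])
      (ContinuousLinearMap.pi
        (![ContinuousLinearMap.proj 0,
          s • (x 1 • ContinuousLinearMap.proj 0 + x 0 • ContinuousLinearMap.proj 1)] :
          Fin 2 → (Fin 2 → ℝ) →L[ℝ] ℝ)) x := by
  apply hasFDerivAt_pi''
  intro i
  rw [ContinuousLinearMap.proj_pi]
  fin_cases i
  · simpa using hasFDerivAt_apply (𝕜 := ℝ) (0 : Fin 2) x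
  · have h0 := hasFDerivAt_apply (𝕜 := ℝ) (0 : Fin 2) x
    have h1 := hasFDerivAt_apply (𝕜 := ℝ) (1 : Fin 2) x
    simpa using (h1.mul h0).const_mul s

lemma jac_eq (s : ℝ) (x : Fin 2 → ℝ)
    (h : uEx =ᶠ[nhds x] fun y => ![y 0, s * (y 1 * y 0)]) :
    Jac uEx x = !![1, 0; s * x 1, s * x 0] := by
  have hF := (hasFDerivAt_aux s x).congr_of_eventuallyEq h
  unfold Jac
  rw [hF.fderiv]
  ext i j
  rw [LinearMap.toMatrix'_apply]
  fin_cases i <;> fin_cases j <;>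
    simp [ContinuousLinearMap.pi_apply, mul_comm]

lemma jac_of_pos (x : Fin 2 → ℝ) (hx : 0 < x 0) :
    Jac uEx x = !![1, 0; x 1, x 0] := by
  have h : uEx =ᶠ[nhds x] fun y => ![y 0, (1 : ℝ) * (y 1 * y 0)] := by
    have hU : IsOpen {y : Fin 2 → ℝ | 0 < y 0} :=
      isOpen_lt continuous_const (continuous_apply 0)
    filter_upwards [hU.mem_nhds hx] with y hy
    simp only [uEx, if_pos hy, one_mul]
  simpa using jac_eq 1 x h

lemma jac_of_neg (x : Fin 2 → ℝ) (hx : x 0 < 0) :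
    Jac uEx x = !![1, 0; -x 1, -x 0] := by
  have h : uEx =ᶠ[nhds x] fun y => ![y 0, (-1 : ℝ) * (y 1 * y 0)] := by
    have hU : IsOpen {y : Fin 2 → ℝ | y 0 < 0} :=
      isOpen_lt (continuous_apply 0) continuous_const
    filter_upwards [hU.mem_nhds hx] with y hy
    simp only [uEx, if_neg (not_lt.2 hy.le), neg_mul, one_mul]
  have := jac_eq (-1) x h
  rw [this]
  norm_num

lemma det_jac (x : Fin 2 → ℝ) (hx : x 0 ≠ 0) : (Jac uEx x).det = |x 0| := by
  rcases hx.lt_or_gt with h | h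
  · rw [jac_of_neg x h, Matrix.det_fin_two_of, abs_of_neg h]; ring
  · rw [jac_of_pos x h, Matrix.det_fin_two_of, abs_of_pos h]; ring

lemma frob_jac (x : Fin 2 → ℝ) (hx : x 0 ≠ 0) :
    frobNorm (Jac uEx x) ^ 2 = 1 + (x 1) ^ 2 + (x 0) ^ 2 := by
  have key : ∀ a b : ℝ, frobNorm !![1, 0; a, b] ^ 2 = 1 + a ^ 2 + b ^ 2 := by
    intro a b
    rw [frobNorm, Real.sq_sqrt (by positivity : (0:ℝ) ≤ _)]
    simp [Fin.sum_univ_two]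
    ring
  rcases hx.lt_or_gt with h | h
  · rw [jac_of_neg x h, key]; ring
  · rw [jac_of_pos x h, key]

lemma ae_ne_zero : ∀ᵐ x : Fin 2 → ℝ, x 0 ≠ 0 := by
  have : {x : Fin 2 → ℝ | x 0 = 0} =
      Set.univ.pi (fun i : Fin 2 => if i = 0 then ({0} : Set ℝ) else Set.univ) := by
    ext x
    simp only [Set.mem_setOf_eq, Set.mem_pi, Set.mem_univ, forall_true_left]
    constructor
    · intro h i
      fin_cases i <;> simp [h]
    · intro h
      have := h 0
      simpa using this
  have h0 : volume {x : Fin 2 → ℝ | x 0 = 0} = 0 := by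
    rw [this, MeasureTheory.volume_pi_pi, Fin.prod_univ_two]
    simp
  rw [ae_iff]
  simpa using h0

lemma lintegral_inv_Ioo01 : ∫⁻ x in Set.Ioo (0:ℝ) 1, ENNReal.ofReal x⁻¹ = ⊤ := by
  by_contra h
  have hne : ∫⁻ x in Set.Ioo (0:ℝ) 1, ENNReal.ofReal x⁻¹ ≠ ⊤ := h
  have hpos : 0 ≤ᵐ[volume.restrict (Set.Ioo (0:ℝ) 1)] fun x : ℝ => x⁻¹ := by
    filter_upwards [ae_restrict_mem measurableSet_Ioo] with x hx
    exact inv_nonneg.2 hx.1.le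
  have hint : IntegrableOn (fun x : ℝ => x⁻¹) (Set.Ioo 0 1) :=
    (lintegral_ofReal_ne_top_iff_integrable
      measurable_inv.aestronglyMeasurable hpos).1 hne
  have hint' : IntegrableOn (fun x : ℝ => x ^ (-1 : ℝ)) (Set.Ioo 0 1) := by
    apply hint.congr_fun_ae
    filter_upwards [ae_restrict_mem measurableSet_Ioo] with x hx
    rw [Real.rpow_neg_one]
  have := (intervalIntegral.integrableOn_Ioo_rpow_iff one_pos).1 hint'
  linarith

lemma lintegral_absinv_Ioo : ∫⁻ x in Set.Ioo (-1:ℝ) 1, ENNReal.ofReal |x|⁻¹ = ⊤ := by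
  rw [eq_top_iff, ← lintegral_inv_Ioo01]
  calc ∫⁻ x in Set.Ioo (0:ℝ) 1, ENNReal.ofReal x⁻¹
      = ∫⁻ x in Set.Ioo (0:ℝ) 1, ENNReal.ofReal |x|⁻¹ := by
        apply setLIntegral_congr_fun measurableSet_Ioo
        intro x hx
        simp only [abs_of_pos hx.1]
    _ ≤ ∫⁻ x in Set.Ioo (-1:ℝ) 1, ENNReal.ofReal |x|⁻¹ :=
        lintegral_mono' (Measure.restrict_mono
          (Set.Ioo_subset_Ioo (by norm_num) le_rfl) le_rfl) le_rfl

lemma lintegral_absinv_Q1 : ∫⁻ x in Q1, ENNReal.ofReal |x 0|⁻¹ = ⊤ := by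
  have e := MeasurableEquiv.piFinTwo (fun _ : Fin 2 => ℝ)
  have hmp := MeasureTheory.volume_preserving_piFinTwo (fun _ : Fin 2 => ℝ)
  have hQ : Q1 = (MeasurableEquiv.piFinTwo (fun _ : Fin 2 => ℝ)) ⁻¹'
      (Set.Ioo (-1:ℝ) 1 ×ˢ Set.Ioo (-1:ℝ) 1) := by
    ext x
    simp only [Q1, Set.mem_pi, Set.mem_univ, forall_true_left, Set.mem_preimage,
      MeasurableEquiv.piFinTwo_apply, Set.mem_prod]
    constructor
    · intro h; exact ⟨h 0, h 1⟩
    · rintro ⟨h0, h1⟩ i; fin_cases i <;> assumption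
  have key := hmp.setLIntegral_comp_preimage_emb
    (MeasurableEquiv.piFinTwo (fun _ : Fin 2 => ℝ)).measurableEmbedding
    (fun p : ℝ × ℝ => ENNReal.ofReal |p.1|⁻¹) (Set.Ioo (-1:ℝ) 1 ×ˢ Set.Ioo (-1:ℝ) 1)
  rw [hQ]
  have : (fun x : Fin 2 → ℝ => ENNReal.ofReal |x 0|⁻¹) =
      fun x : Fin 2 → ℝ => (fun p : ℝ × ℝ => ENNReal.ofReal |p.1|⁻¹)
        ((MeasurableEquiv.piFinTwo (fun _ : Fin 2 => ℝ)) x) := rfl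
  rw [this, key]
  have hvol : (volume : Measure (ℝ × ℝ)) = (volume : Measure ℝ).prod volume := rfl
  rw [hvol, ← Measure.prod_restrict]
  have hm := lintegral_prod_mul (μ := volume.restrict (Set.Ioo (-1:ℝ) 1))
      (ν := volume.restrict (Set.Ioo (-1:ℝ) 1))
      (f := fun x : ℝ => ENNReal.ofReal |x|⁻¹) (g := fun _ : ℝ => (1 : ℝ≥0∞))
      ((measurable_abs.inv.ennreal_ofReal).aemeasurable) aemeasurable_const
  simp only [mul_one] at hm
  rw [hm, lintegral_absinv_Ioo, lintegral_one, Measure.restrict_apply_univ, Real.volume_Ioo]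
  rw [ENNReal.top_mul (by norm_num)]

/-- Example 1: det ∇u = |x₁| > 0 a.e. on (-1,1)², but the dilatation
K = |∇u|²/det ∇u is not integrable. -/
theorem stmt_12 :
    (∀ᵐ x : Fin 2 → ℝ, x ∈ Q1 →
        (Jac uEx x).det = |x 0| ∧ 0 < (Jac uEx x).det) ∧
    ∫⁻ x in Q1, ENNReal.ofReal (frobNorm (Jac uEx x) ^ 2 / (Jac uEx x).det) = ⊤ := by
  constructor
  · filter_upwards [ae_ne_zero] with x hx _
    refine ⟨det_jac x hx, ?_⟩
    rw [det_jac x hx]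
    exact abs_pos.2 hx
  · rw [eq_top_iff, ← lintegral_absinv_Q1]
    apply lintegral_mono_ae
    filter_upwards [ae_restrict_of_ae ae_ne_zero] with x hx
    rw [det_jac x hx, frob_jac x hx]
    apply ENNReal.ofReal_le_ofReal
    rw [div_eq_mul_inv]
    nth_rewrite 1 [← one_mul |x 0|⁻¹]
    apply mul_le_mul_of_nonneg_right _ (by positivity)
    nlinarith [sq_nonneg (x 0), sq_nonneg (x 1)]
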